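/- arXiv:1803.03527 — 3 statements merged into one kernel-verified Lean document; each statement's English description precedes it below -/
import Mathlib

section
/- Let G be a minimal non-DP-(3,1)*-colorable graph, i.e., a finite simple graph that is not DP-(3,1)*-colorable but every graph obtained from G by deleting a nonempty set of vertices is DP-(3,1)*-colorable. Then every vertex of G has degree at least 3. -/
/-- A cover `H` of a graph `G` with respect to a list assignment `L`.
The vertex set of the cover is modeled as the fibers `{u} × L u` inside `V × α`;
all edges of `H` are required to lie inside these fibers. -/
structure DPCover {V α : Type*} (G : SimpleGraph V) (L : V → Finset α)
    (H : SimpleGraph (V × α)) : Prop where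
  mem_of_adj : ∀ (u v : V) (c c' : α), H.Adj (u, c) (v, c') → c ∈ L u ∧ c' ∈ L v
  fiber_complete : ∀ (u : V) (c c' : α), c ∈ L u → c' ∈ L u → c ≠ c' →
    H.Adj (u, c) (u, c')
  matching : ∀ (u v : V), u ≠ v → ∀ (c c' c'' : α),
    H.Adj (u, c) (v, c') → H.Adj (u, c) (v, c'') → c' = c''
  no_edge : ∀ (u v : V), u ≠ v → ¬ G.Adj u v → ∀ (c c' : α), ¬ H.Adj (u, c) (v, c')

/-- `S` is a 1-representative set for a cover `H`: it consists of vertices of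
the cover, has size `|V(G)|`, contains at most one vertex from each fiber, and
induces a subgraph of `H` of maximum degree at most 1. -/
def IsRepSet {V α : Type*} [Fintype V] (L : V → Finset α)
    (H : SimpleGraph (V × α)) (d : ℕ) (S : Finset (V × α)) : Prop :=
  (∀ p ∈ S, p.2 ∈ L p.1) ∧ S.card = Fintype.card V ∧
    (∀ (u : V) (c c' : α), (u, c) ∈ S → (u, c') ∈ S → c = c') ∧
    ∀ p ∈ S, {q ∈ (S : Set (V × α)) | H.Adj p q}.ncard ≤ d

/-- `G` is DP-`(3,1)*`-colorable: for every list assignment `L` with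
`|L(v)| = 3` for all `v` and every cover `H` of `G` with respect to `L`,
there is a 1-representative set. -/
def DPColorable31 {W : Type*} [Fintype W] (G : SimpleGraph W) : Prop :=
  ∀ L : W → Finset ℕ, (∀ v : W, (L v).card = 3) →
    ∀ H : SimpleGraph (W × ℕ), DPCover G L H →
      ∃ S : Finset (W × ℕ), IsRepSet L H 1 S

/-- If `G` is a minimal non-DP-`(3,1)*`-colorable graph (not DP-`(3,1)*`-colorable,
but every graph obtained from `G` by deleting a nonempty set of vertices is
DP-`(3,1)*`-colorable), then every vertex of `G` has degree at least 3. -/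
theorem minimal_degree_ge_three
    {V : Type*} [Fintype V] [DecidableEq V]
    (G : SimpleGraph V) [DecidableRel G.Adj]
    (hnot : ¬ DPColorable31 G)
    (hmin : ∀ s : Finset V, s.Nonempty →
      DPColorable31 (G.induce ((sᶜ : Finset V) : Set V)))
    (v : V) : 3 ≤ G.degree v := by
  classical
  by_contra hdeg
  push_neg at hdeg
  replace hdeg : G.degree v ≤ 2 := Nat.lt_succ_iff.mp hdeg
  apply hnot
  intro L hL H hH
  have hsub := hmin {v} ⟨v, Finset.mem_singleton_self v⟩
  set s : Set V := ((({v} : Finset V)ᶜ : Finset V) : Set V) with hs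
  have hmem : ∀ x : V, x ∈ s ↔ x ≠ v := by
    intro x; simp [hs]
  let e : s × ℕ → V × ℕ := fun p => ((p.1 : V), p.2)
  have he_inj : Function.Injective e := by
    rintro ⟨a, c⟩ ⟨b, d⟩ h
    simp only [e, Prod.mk.injEq] at h
    exact Prod.ext (Subtype.ext h.1) h.2
  let H' : SimpleGraph (s × ℕ) := H.comap e
  have hadj' : ∀ (p q : s × ℕ), H'.Adj p q ↔ H.Adj (e p) (e q) := fun p q => Iff.rfl
  have hcover : DPCover (G.induce s) (fun u => L u) H' := by
    constructor
    · intro u w c c' h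
      exact hH.mem_of_adj u.1 w.1 c c' h
    · intro u c c' hc hc' hne
      exact hH.fiber_complete u.1 c c' hc hc' hne
    · intro u w hne c c' c'' h1 h2
      exact hH.matching u.1 w.1 (fun h => hne (Subtype.ext h)) c c' c'' h1 h2
    · intro u w hne hnadj c c' h
      exact hH.no_edge u.1 w.1 (fun h' => hne (Subtype.ext h')) hnadj c c' h
  obtain ⟨S', hS'1, hS'2, hS'3, hS'4⟩ := hsub (fun u => L u) (fun u => hL u) H' hcover
  set S0 : Finset (V × ℕ) := S'.image e with hS0
  have hfst : ∀ p ∈ S0, p.1 ≠ v := by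
    intro p hp
    obtain ⟨q, hq, rfl⟩ := Finset.mem_image.mp hp
    exact (hmem q.1.1).mp q.1.2
  have hS0L : ∀ p ∈ S0, p.2 ∈ L p.1 := by
    intro p hp
    obtain ⟨q, hq, rfl⟩ := Finset.mem_image.mp hp
    exact hS'1 q hq
  have hS0fiber : ∀ (u : V) (c1 c2 : ℕ), (u, c1) ∈ S0 → (u, c2) ∈ S0 → c1 = c2 := by
    intro u c1 c2 h1 h2
    obtain ⟨q1, hq1, hq1e⟩ := Finset.mem_image.mp h1
    obtain ⟨q2, hq2, hq2e⟩ := Finset.mem_image.mp h2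
    have h11 : (q1.1 : V) = u ∧ q1.2 = c1 := by
      simpa [e, Prod.ext_iff] using hq1e
    have h21 : (q2.1 : V) = u ∧ q2.2 = c2 := by
      simpa [e, Prod.ext_iff] using hq2e
    have hq12 : q1.1 = q2.1 := Subtype.ext (h11.1.trans h21.1.symm)
    have m1 : (q1.1, c1) ∈ S' := by
      have : (q1.1, q1.2) ∈ S' := hq1
      rwa [h11.2] at this
    have m2 : (q1.1, c2) ∈ S' := by
      have : (q2.1, q2.2) ∈ S' := hq2
      rwa [h21.2, ← hq12] at this
    exact hS'3 q1.1 c1 c2 m1 m2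
  have hS0card : S0.card = Fintype.card V - 1 := by
    rw [hS0, Finset.card_image_of_injective _ he_inj, hS'2]
    have : Fintype.card s = Fintype.card ↥(({v} : Finset V)ᶜ) :=
      Fintype.card_congr (Equiv.subtypeEquivRight (fun x => by simp [hs]))
    rw [this, Fintype.card_coe, Finset.card_compl, Finset.card_singleton]
  -- the bad colors
  set B : Finset ℕ := (L v).filter (fun c => ∃ p ∈ S0, H.Adj (v, c) p) with hB
  have hBsub : B ⊆ L v := Finset.filter_subset _ _
  -- witness function
  let f : ℕ → V × ℕ := fun c =>
    if h : ∃ p ∈ S0, H.Adj (v, c) p then h.choose else (v, 0)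
  have hfprop : ∀ c ∈ B, f c ∈ S0 ∧ H.Adj (v, c) (f c) := by
    intro c hc
    have h : ∃ p ∈ S0, H.Adj (v, c) p := (Finset.mem_filter.mp hc).2
    simp only [f, dif_pos h]
    exact ⟨h.choose_spec.1, h.choose_spec.2⟩
  set T : Finset (V × ℕ) := S0.filter (fun p => G.Adj v p.1) with hT
  have hmaps : ∀ c ∈ B, f c ∈ T := by
    intro c hc
    obtain ⟨hmem0, hadj⟩ := hfprop c hc
    refine Finset.mem_filter.mpr ⟨hmem0, ?_⟩
    by_contra hna
    exact hH.no_edge v (f c).1 (Ne.symm (hfst _ hmem0)) hna c (f c).2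
      hadj
  have hinj : Set.InjOn f B := by
    intro c1 hc1 c2 hc2 hfe
    obtain ⟨hm1, ha1⟩ := hfprop c1 hc1
    obtain ⟨hm2, ha2⟩ := hfprop c2 hc2
    rw [hfe] at ha1
    exact hH.matching (f c2).1 v (hfst _ hm2) (f c2).2 c1 c2 ha1.symm ha2.symm
  have hTcard : T.card ≤ 2 := by
    have hTinj : Set.InjOn Prod.fst (T : Set (V × ℕ)) := by
      intro p hp q hq hpq
      have hp' : p ∈ S0 := Finset.mem_filter.mp hp |>.1
      have hq' : q ∈ S0 := Finset.mem_filter.mp hq |>.1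
      have : p.2 = q.2 := hS0fiber p.1 p.2 q.2 hp' (hpq ▸ hq')
      exact Prod.ext hpq this
    have : T.card = (T.image Prod.fst).card :=
      (Finset.card_image_of_injOn hTinj).symm
    rw [this]
    refine le_trans (Finset.card_le_card ?_) hdeg
    intro u hu
    obtain ⟨p, hp, rfl⟩ := Finset.mem_image.mp hu
    exact SimpleGraph.mem_neighborFinset G v p.1 |>.mpr (Finset.mem_filter.mp hp).2
  have hBcard : B.card ≤ 2 := le_trans (Finset.card_le_card_of_injOn f hmaps hinj) hTcard
  -- pick a good color
  have hgoodex : (L v \ B).Nonempty := by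
    rw [← Finset.card_pos, Finset.card_sdiff_of_subset hBsub, hL v]
    omega
  obtain ⟨c, hc⟩ := hgoodex
  have hcL : c ∈ L v := (Finset.mem_sdiff.mp hc).1
  have hgood : ∀ p ∈ S0, ¬ H.Adj (v, c) p := by
    intro p hp hadj
    exact (Finset.mem_sdiff.mp hc).2 (Finset.mem_filter.mpr ⟨hcL, ⟨p, hp, hadj⟩⟩)
  have hvnot : (v, c) ∉ S0 := fun h => hfst _ h rfl
  refine ⟨insert (v, c) S0, ?_, ?_, ?_, ?_⟩
  · intro p hp
    rcases Finset.mem_insert.mp hp with rfl | hp0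
    · exact hcL
    · exact hS0L p hp0
  · rw [Finset.card_insert_of_notMem hvnot, hS0card]
    have : 1 ≤ Fintype.card V := Fintype.card_pos_iff.mpr ⟨v⟩
    omega
  · intro u c1 c2 h1 h2
    rcases Finset.mem_insert.mp h1 with he1 | h10 <;>
      rcases Finset.mem_insert.mp h2 with he2 | h20
    · rw [Prod.mk.injEq] at he1 he2; rw [he1.2, he2.2]
    · rw [Prod.mk.injEq] at he1; exact absurd h20 (by rw [he1.1]; exact fun h => hfst _ h rfl)
    · rw [Prod.mk.injEq] at he2; exact absurd h10 (by rw [he2.1]; exact fun h => hfst _ h rfl)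
    · exact hS0fiber u c1 c2 h10 h20
  · intro p hp
    rcases Finset.mem_insert.mp hp with rfl | hp0
    · have hempty : {q ∈ ((insert (v, c) S0 : Finset (V × ℕ)) : Set (V × ℕ)) |
          H.Adj (v, c) q} = ∅ := by
        ext q
        simp only [Set.mem_setOf_eq, Set.mem_empty_iff_false, iff_false, not_and,
          Finset.coe_insert, Set.mem_insert_iff, Finset.mem_coe]
        rintro (rfl | hq0)
        · exact fun h => H.irrefl h
        · exact hgood q hq0
      rw [hempty]
      simp
    · obtain ⟨p', hp', rfl⟩ := Finset.mem_image.mp hp0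
      have hset : {q ∈ ((insert (v, c) S0 : Finset (V × ℕ)) : Set (V × ℕ)) |
          H.Adj (e p') q} = e '' {q' ∈ (S' : Set (s × ℕ)) | H'.Adj p' q'} := by
        ext q
        simp only [Set.mem_setOf_eq, Finset.coe_insert, Set.mem_insert_iff,
          Finset.mem_coe, Set.mem_image]
        constructor
        · rintro ⟨rfl | hq0, hadj⟩
          · exact absurd hadj.symm (hgood _ (Finset.mem_image.mpr ⟨p', hp', rfl⟩))
          · obtain ⟨q', hq', rfl⟩ := Finset.mem_image.mp hq0
            exact ⟨q', ⟨hq', hadj⟩, rfl⟩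
        · rintro ⟨q', ⟨hq', hadj⟩, rfl⟩
          exact ⟨Or.inr (Finset.mem_image.mpr ⟨q', hq', rfl⟩), hadj⟩
      rw [hset, Set.ncard_image_of_injective _ he_inj]
      exact hS'4 p' hp'
end

section
/- Let G be a minimal non-DP-(3,1)*-colorable graph, i.e., a finite simple graph that is not DP-(3,1)*-colorable but every graph obtained from G by deleting a nonempty set of vertices is DP-(3,1)*-colorable. Then no two vertices of degree 3 in G are adjacent; equivalently, every neighbor of a 3-vertex of G has degree at least 4. -/
/-- If `G` is a minimal non-DP-`(3,1)*`-colorable graph (not DP-`(3,1)*`-colorable,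
but every graph obtained from `G` by deleting a nonempty set of vertices is
DP-`(3,1)*`-colorable), then no two vertices of degree 3 in `G` are adjacent;
equivalently, every neighbor of a 3-vertex has degree at least 4. -/
theorem minimal_no_adjacent_three_vertices
    {V : Type*} [Fintype V] [DecidableEq V]
    (G : SimpleGraph V) [DecidableRel G.Adj]
    (hnot : ¬ DPColorable31 G)
    (hmin : ∀ s : Finset V, s.Nonempty →
      DPColorable31 (G.induce ((sᶜ : Finset V) : Set V)))
    (u v : V) (huv : G.Adj u v) :
    ¬ (G.degree u = 3 ∧ G.degree v = 3) := by
  rintro ⟨hdu, hdv⟩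
  classical
  have hne : u ≠ v := huv.ne
  apply hnot
  intro L hL H hH
  set s : Finset V := {u, v} with hs
  have hcol := hmin s ⟨u, by simp [hs]⟩
  set T : Set V := ((sᶜ : Finset V) : Set V) with hT
  have hmemT : ∀ x, x ∈ T ↔ (x ≠ u ∧ x ≠ v) := by
    intro x; simp only [hT, hs]; simp; tauto
  have huT : u ∉ T := by simp [hmemT]
  have hvT : v ∉ T := by simp [hmemT]
  set ι : (↥T × ℕ) → (V × ℕ) := fun p => (p.1.1, p.2) with hι
  have hιinj : Function.Injective ι := by
    rintro ⟨⟨a, ha⟩, c⟩ ⟨⟨b, hb⟩, d⟩ h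
    simp only [hι, Prod.mk.injEq] at h
    obtain ⟨rfl, rfl⟩ := h
    rfl
  set H' : SimpleGraph (↥T × ℕ) := H.comap ι with hH'
  have covH' : DPCover (G.induce T) (fun w => L w.1) H' := by
    constructor
    · intro a b c c' h
      exact hH.mem_of_adj a.1 b.1 c c' h
    · intro a c c' hc hc' hcc
      exact hH.fiber_complete a.1 c c' hc hc' hcc
    · intro a b hab c c' c'' h1 h2
      exact hH.matching a.1 b.1 (fun h => hab (Subtype.ext h)) c c' c'' h1 h2
    · intro a b hab hnadj c c' h
      exact hH.no_edge a.1 b.1 (fun h' => hab (Subtype.ext h')) hnadj c c' h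
  obtain ⟨S', hS'mem, hS'card, hS'fib, hS'deg⟩ :=
    hcol (fun w => L w.1) (fun w => hL w.1) H' covH'
  -- key extension lemma
  have key : ∀ x y : V, G.Adj x y → G.degree x = 3 → x ∉ T → y ∉ T →
      ∃ c ∈ L x, ∀ p ∈ S', ¬ H.Adj (x, c) (ι p) := by
    intro x y hxy hdx hxT hyT
    set B : Finset ℕ := (L x).filter (fun c => ∃ p ∈ S', H.Adj (x, c) (ι p)) with hB
    have hBsub : B ⊆ L x := Finset.filter_subset _ _
    have hBcard : B.card ≤ 2 := by
      set f : ℕ → V := fun c =>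
        if h : ∃ p, p ∈ S' ∧ H.Adj (x, c) (ι p) then (Classical.choose h).1.1 else x with hf
      have hwit : ∀ c ∈ B, ∃ h : ∃ p, p ∈ S' ∧ H.Adj (x, c) (ι p), True := by
        intro c hc
        obtain ⟨-, p, hp, hadj⟩ := Finset.mem_filter.mp hc
        exact ⟨⟨p, hp, hadj⟩, trivial⟩
      have hmap : ∀ c ∈ B, f c ∈ (G.neighborFinset x).filter (· ∈ T) := by
        intro c hc
        obtain ⟨h, -⟩ := hwit c hc
        simp only [hf, dif_pos h]
        obtain ⟨hp, hadj⟩ := Classical.choose_spec h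
        have hwT : (Classical.choose h).1.1 ∈ T := (Classical.choose h).1.2
        have hwx : (Classical.choose h).1.1 ≠ x := fun he => hxT (he ▸ hwT)
        have hGadj : G.Adj x (Classical.choose h).1.1 := by
          by_contra hn
          exact hH.no_edge x _ (Ne.symm hwx) hn c _ hadj
        simp [Finset.mem_filter, hGadj, hwT]
      have hinj : Set.InjOn f B := by
        intro c hc c' hc' hfe
        obtain ⟨h, -⟩ := hwit c hc
        obtain ⟨h', -⟩ := hwit c' hc'
        simp only [hf, dif_pos h, dif_pos h'] at hfe
        set p := Classical.choose h with hpdef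
        set q := Classical.choose h' with hqdef
        obtain ⟨hp, hadj⟩ := Classical.choose_spec h
        obtain ⟨hq, hadj'⟩ := Classical.choose_spec h'
        have h1 : p.1 = q.1 := Subtype.ext hfe
        have h2 : p.2 = q.2 := by
          apply hS'fib p.1 p.2 q.2
          · exact hp
          · rw [h1]; exact hq
        have hpq : ι p = ι q := by simp [hι, h1, h2]
        have hwx : p.1.1 ≠ x := fun he => hxT (he ▸ p.1.2)
        rw [← hpq] at hadj'
        exact hH.matching p.1.1 x hwx p.2 c c' (H.adj_symm hadj) (H.adj_symm hadj')
      calc B.card ≤ ((G.neighborFinset x).filter (· ∈ T)).card :=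
            Finset.card_le_card_of_injOn f hmap hinj
        _ ≤ ((G.neighborFinset x).erase y).card := by
            apply Finset.card_le_card
            intro w hw
            rw [Finset.mem_filter] at hw
            rw [Finset.mem_erase]
            exact ⟨fun he => hyT (he ▸ hw.2), hw.1⟩
        _ ≤ 2 := by
            rw [Finset.card_erase_of_mem (by simpa using hxy)]
            simp [← SimpleGraph.card_neighborFinset_eq_degree] at hdx ⊢
            omega
    have hnon : (L x \ B).Nonempty := by
      rw [← Finset.card_pos, Finset.card_sdiff_of_subset hBsub, hL x]
      omega
    obtain ⟨c, hc⟩ := hnon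
    rw [Finset.mem_sdiff] at hc
    refine ⟨c, hc.1, fun p hp hadj => hc.2 ?_⟩
    exact Finset.mem_filter.mpr ⟨hc.1, p, hp, hadj⟩
  obtain ⟨cu, hcuL, hcu⟩ := key u v huv hdu huT hvT
  obtain ⟨cv, hcvL, hcv⟩ := key v u huv.symm hdv hvT huT
  refine ⟨(S'.image ι) ∪ {(u, cu), (v, cv)}, ?_, ?_, ?_, ?_⟩
  · -- membership
    intro p hp
    rcases Finset.mem_union.mp hp with h | h
    · obtain ⟨q, hq, rfl⟩ := Finset.mem_image.mp h
      exact hS'mem q hq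
    · rcases Finset.mem_insert.mp h with rfl | h
      · exact hcuL
      · rw [Finset.mem_singleton] at h; subst h; exact hcvL
  · -- card
    have hfst : ∀ p ∈ S'.image ι, p.1 ∈ T := by
      intro p hp
      obtain ⟨q, hq, rfl⟩ := Finset.mem_image.mp hp
      exact q.1.2
    have hdisj : Disjoint (S'.image ι) {(u, cu), (v, cv)} := by
      rw [Finset.disjoint_right]
      intro p hp hp'
      rcases Finset.mem_insert.mp hp with rfl | hp
      · exact huT (hfst _ hp')
      · rw [Finset.mem_singleton] at hp; subst hp; exact hvT (hfst _ hp')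
    rw [Finset.card_union_of_disjoint hdisj,
      Finset.card_image_of_injective _ hιinj, hS'card]
    have h1 : Fintype.card ↥T = (sᶜ).card := by
      rw [← Set.toFinset_card]; simp [hT]
    have h2 : ({(u, cu), (v, cv)} : Finset (V × ℕ)).card = 2 :=
      Finset.card_pair (by simp [hne])
    have h3 : s.card = 2 := Finset.card_pair hne
    have h4 : s.card ≤ Fintype.card V := by
      simpa using Finset.card_le_univ s
    rw [h1, h2, Finset.card_compl, h3]
    omega
  · -- fiber uniqueness
    intro w c c' h1 h2
    have hcase : ∀ c₀ : ℕ, (w, c₀) ∈ S'.image ι ∪ {(u, cu), (v, cv)} →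
        (w ∈ T ∧ ∃ q ∈ S', ι q = (w, c₀)) ∨ (w = u ∧ c₀ = cu) ∨ (w = v ∧ c₀ = cv) := by
      intro c₀ h
      rcases Finset.mem_union.mp h with h | h
      · obtain ⟨q, hq, hqe⟩ := Finset.mem_image.mp h
        left
        refine ⟨?_, q, hq, hqe⟩
        have hfe : q.1.1 = w := congrArg Prod.fst hqe
        exact hfe ▸ q.1.2
      · rcases Finset.mem_insert.mp h with h | h
        · right; left; exact ⟨congrArg Prod.fst h, congrArg Prod.snd h⟩
        · rw [Finset.mem_singleton] at h
          right; right; exact ⟨congrArg Prod.fst h, congrArg Prod.snd h⟩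
    rcases hcase c h1 with ⟨hwT, q, hq, hqe⟩ | ⟨rfl, rfl⟩ | ⟨rfl, rfl⟩ <;>
      rcases hcase c' h2 with ⟨hwT', q', hq', hqe'⟩ | ⟨he, rfl⟩ | ⟨he, rfl⟩
    · -- both in image
      have h1' : q.1.1 = w := congrArg Prod.fst hqe
      have h1'' : q'.1.1 = w := congrArg Prod.fst hqe'
      have hq1 : q.1 = q'.1 := Subtype.ext (h1'.trans h1''.symm)
      have hqq : q.2 = q'.2 := by
        apply hS'fib q.1 q.2 q'.2 hq
        rw [hq1]; exact hq'
      have e1 : q.2 = c := congrArg Prod.snd hqe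
      have e2 : q'.2 = c' := congrArg Prod.snd hqe'
      omega
    · exact absurd (he ▸ hwT) huT
    · exact absurd (he ▸ hwT) hvT
    · exact absurd hwT' huT
    · rfl
    · exact absurd he hne
    · exact absurd hwT' hvT
    · exact absurd he.symm hne
    · rfl
  · -- degree condition
    intro p hp
    set S : Finset (V × ℕ) := S'.image ι ∪ {(u, cu), (v, cv)} with hS
    rcases Finset.mem_union.mp hp with h | h
    · obtain ⟨p0, hp0, rfl⟩ := Finset.mem_image.mp h
      have hset : {q ∈ (S : Set (V × ℕ)) | H.Adj (ι p0) q}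
          = ι '' {q ∈ (S' : Set (↥T × ℕ)) | H'.Adj p0 q} := by
        ext q
        constructor
        · rintro ⟨hqS, hadj⟩
          rcases Finset.mem_union.mp hqS with h | h
          · obtain ⟨q0, hq0, rfl⟩ := Finset.mem_image.mp h
            exact ⟨q0, ⟨hq0, hadj⟩, rfl⟩
          · exfalso
            rcases Finset.mem_insert.mp h with rfl | h
            · exact hcu p0 hp0 (H.adj_symm hadj)
            · rw [Finset.mem_singleton] at h; subst h
              exact hcv p0 hp0 (H.adj_symm hadj)
        · rintro ⟨q0, ⟨hq0, hadj⟩, rfl⟩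
          exact ⟨Finset.mem_union.mpr (Or.inl (Finset.mem_image_of_mem ι hq0)), hadj⟩
      rw [hset, Set.ncard_image_of_injective _ hιinj]
      exact hS'deg p0 hp0
    · rcases Finset.mem_insert.mp h with rfl | h
      · -- p = (u, cu)
        have hsub : {q ∈ (S : Set (V × ℕ)) | H.Adj (u, cu) q} ⊆ {(v, cv)} := by
          rintro q ⟨hqS, hadj⟩
          rcases Finset.mem_union.mp hqS with h | h
          · obtain ⟨q0, hq0, rfl⟩ := Finset.mem_image.mp h
            exact absurd hadj (hcu q0 hq0)
          · rcases Finset.mem_insert.mp h with rfl | h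
            · exact absurd hadj (H.loopless.irrefl _)
            · rw [Finset.mem_singleton] at h; subst h; rfl
        calc {q ∈ (S : Set (V × ℕ)) | H.Adj (u, cu) q}.ncard
            ≤ ({(v, cv)} : Set (V × ℕ)).ncard :=
              Set.ncard_le_ncard hsub (Set.finite_singleton _)
          _ = 1 := Set.ncard_singleton _
      · rw [Finset.mem_singleton] at h; subst h
        have hsub : {q ∈ (S : Set (V × ℕ)) | H.Adj (v, cv) q} ⊆ {(u, cu)} := by
          rintro q ⟨hqS, hadj⟩
          rcases Finset.mem_union.mp hqS with h | h
          · obtain ⟨q0, hq0, rfl⟩ := Finset.mem_image.mp h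
            exact absurd hadj (hcv q0 hq0)
          · rcases Finset.mem_insert.mp h with rfl | h
            · rfl
            · rw [Finset.mem_singleton] at h; subst h
              exact absurd hadj (H.loopless.irrefl _)
        calc {q ∈ (S : Set (V × ℕ)) | H.Adj (v, cv) q}.ncard
            ≤ ({(u, cu)} : Set (V × ℕ)).ncard :=
              Set.ncard_le_ncard hsub (Set.finite_singleton _)
          _ = 1 := Set.ncard_singleton _
end

section
/- Let G be a minimal non-DP-(3,1)*-colorable graph, i.e., a finite simple graph that is not DP-(3,1)*-colorable but every graph obtained from G by deleting a nonempty set of vertices is DP-(3,1)*-colorable. Then every vertex of degree 4 in G is adjacent to at most two vertices of degree 3. -/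
lemma repset_of_fun {V : Type*} [Fintype V] [DecidableEq V]
    (L : V → Finset ℕ) (H : SimpleGraph (V × ℕ)) (f : V → ℕ)
    (hmem : ∀ u, f u ∈ L u)
    (hconf : ∀ u w w', H.Adj (u, f u) (w, f w) → H.Adj (u, f u) (w', f w') → w = w') :
    ∃ S, IsRepSet L H 1 S := by
  classical
  have hinj : Function.Injective (fun u : V => (u, f u)) := by
    intro a b h; exact congrArg Prod.fst h
  refine ⟨Finset.univ.image (fun u => (u, f u)), ?_, ?_, ?_, ?_⟩
  · intro p hp
    obtain ⟨u, -, rfl⟩ := Finset.mem_image.1 hp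
    exact hmem u
  · rw [Finset.card_image_of_injective _ hinj, Finset.card_univ]
  · intro u c c' hc hc'
    obtain ⟨a, -, ha⟩ := Finset.mem_image.1 hc
    obtain ⟨b, -, hb⟩ := Finset.mem_image.1 hc'
    obtain ⟨rfl, rfl⟩ := Prod.mk.injEq .. ▸ ha
    obtain ⟨rfl, rfl⟩ := Prod.mk.injEq .. ▸ hb
    rfl
  · intro p hp
    obtain ⟨u, -, rfl⟩ := Finset.mem_image.1 hp
    have hfin : {q ∈ ((Finset.univ.image (fun u : V => (u, f u))) : Set (V × ℕ)) |
        H.Adj (u, f u) q}.Finite :=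
      Set.Finite.subset (Finset.finite_toSet _) (fun q hq => hq.1)
    rw [Set.ncard_le_one hfin]
    intro q1 hq1 q2 hq2
    obtain ⟨hq1S, hq1A⟩ := hq1
    obtain ⟨hq2S, hq2A⟩ := hq2
    rw [Finset.coe_image, Finset.coe_univ, Set.image_univ] at hq1S hq2S
    obtain ⟨a, rfl⟩ := hq1S
    obtain ⟨b, rfl⟩ := hq2S
    exact congrArg (fun w => (w, f w)) (hconf u a b hq1A hq2A)

lemma exists_good_restriction {V : Type*} [Fintype V] [DecidableEq V]
    (G : SimpleGraph V) (v : V) (L : V → Finset ℕ) (H : SimpleGraph (V × ℕ))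
    (hcol : DPColorable31 (G.induce (((({v} : Finset V)ᶜ : Finset V)) : Set V)))
    (hL : ∀ u, (L u).card = 3) (hH : DPCover G L H) :
    ∃ g : V → ℕ, (∀ u, u ≠ v → g u ∈ L u) ∧
      ∀ u, u ≠ v → ∀ w w', w ≠ v → w' ≠ v →
        H.Adj (u, g u) (w, g w) → H.Adj (u, g u) (w', g w') → w = w' := by
  classical
  set s : Set V := ((({v} : Finset V)ᶜ : Finset V) : Set V) with hs
  have hmemc : ∀ u : V, u ∈ s ↔ u ≠ v := by
    intro u; simp [hs]
  set L' : s → Finset ℕ := fun w => L w.1 with hL'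
  set H' : SimpleGraph (s × ℕ) := H.comap (Prod.map Subtype.val id) with hH'
  have hadj' : ∀ (a b : s) (c c' : ℕ), H'.Adj (a, c) (b, c') ↔ H.Adj (a.1, c) (b.1, c') := by
    intro a b c c'; rfl
  have hcov : DPCover (G.induce s) L' H' := by
    constructor
    · intro a b c c' h
      exact hH.mem_of_adj a.1 b.1 c c' h
    · intro a c c' hc hc' hne
      exact hH.fiber_complete a.1 c c' hc hc' hne
    · intro a b hab c c' c'' h1 h2
      exact hH.matching a.1 b.1 (fun h => hab (Subtype.ext h)) c c' c'' h1 h2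
    · intro a b hab hna c c'
      refine hH.no_edge a.1 b.1 (fun h => hab (Subtype.ext h)) (fun h => hna ?_) c c'
      exact h
  obtain ⟨S', h1, h2, h3, h4⟩ := hcol L' (fun w => hL w.1) H' hcov
  have hsurj : ∀ w : s, ∃ c, (w, c) ∈ S' := by
    intro w
    have himg : S'.image Prod.fst = Finset.univ := by
      apply Finset.eq_univ_of_card
      rw [Finset.card_image_of_injOn, h2]
      rintro ⟨a, c⟩ hp ⟨b, c'⟩ hq (hpq : a = b)
      subst hpq
      exact Prod.ext rfl (h3 a c c' hp hq)
    have : w ∈ S'.image Prod.fst := himg ▸ Finset.mem_univ w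
    obtain ⟨p, hp, hpe⟩ := Finset.mem_image.1 this
    exact ⟨p.2, by rwa [← hpe, Prod.mk.eta]⟩
  choose σ hσ using hsurj
  refine ⟨fun u => if h : u ∈ s then σ ⟨u, h⟩ else 0, ?_, ?_⟩
  · intro u hu
    have hus : u ∈ s := (hmemc u).2 hu
    show (if h : u ∈ s then σ ⟨u, h⟩ else 0) ∈ L u
    rw [dif_pos hus]
    exact h1 _ (hσ ⟨u, hus⟩)
  · intro u hu w w' hw hw' ha ha'
    have hus : u ∈ s := (hmemc u).2 hu
    have hws : w ∈ s := (hmemc w).2 hw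
    have hw's : w' ∈ s := (hmemc w').2 hw'
    simp only [dif_pos hus, dif_pos hws, dif_pos hw's] at ha ha'
    have hfin : {q | q ∈ (S' : Set _) ∧ H'.Adj (⟨u, hus⟩, σ ⟨u, hus⟩) q}.Finite :=
      Set.Finite.subset (Finset.finite_toSet _) (fun q hq => hq.1)
    have key := (Set.ncard_le_one hfin).1 (h4 _ (hσ ⟨u, hus⟩))
    have heq := key (⟨w, hws⟩, σ ⟨w, hws⟩) ⟨hσ _, (hadj' _ _ _ _).2 ha⟩
      (⟨w', hw's⟩, σ ⟨w', hw's⟩) ⟨hσ _, (hadj' _ _ _ _).2 ha'⟩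
    exact congrArg (fun p => (p.1 : V)) heq

/-- If `G` is a minimal non-DP-`(3,1)*`-colorable graph (not DP-`(3,1)*`-colorable,
but every graph obtained from `G` by deleting a nonempty set of vertices is
DP-`(3,1)*`-colorable), then every vertex of degree 4 in `G` is adjacent to at
most two vertices of degree 3. -/
theorem minimal_four_vertex_few_three_neighbors
    {V : Type*} [Fintype V] [DecidableEq V]
    (G : SimpleGraph V) [DecidableRel G.Adj]
    (hnot : ¬ DPColorable31 G)
    (hmin : ∀ s : Finset V, s.Nonempty →
      DPColorable31 (G.induce ((sᶜ : Finset V) : Set V)))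
    (v : V) (hv : G.degree v = 4) :
    ((G.neighborFinset v).filter (fun u => G.degree u = 3)).card ≤ 2 := by
  classical
  by_contra hcon
  push_neg at hcon
  rw [DPColorable31] at hnot
  push_neg at hnot
  obtain ⟨L, hL, H, hcov, hno⟩ := hnot
  obtain ⟨g, hg, hgconf⟩ := exists_good_restriction G v L H
    (hmin {v} (Finset.singleton_nonempty v)) hL hcov
  set N := G.neighborFinset v with hNdef
  have hN : N.card = 4 := hv
  have hadjN : ∀ u, u ∈ N ↔ G.Adj v u := fun u => SimpleGraph.mem_neighborFinset G v u
  have hneN : ∀ u ∈ N, u ≠ v := fun u hu => ((hadjN u).1 hu).ne'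
  set B : ℕ → Finset V := fun c => N.filter (fun u => H.Adj (u, g u) (v, c)) with hBdef
  have hBsub : ∀ c w, w ≠ v → H.Adj (w, g w) (v, c) → w ∈ B c := by
    intro c w hwv hadj
    refine Finset.mem_filter.2 ⟨?_, hadj⟩
    rw [hadjN]
    by_contra hna
    exact hcov.no_edge w v hwv (fun h => hna h.symm) (g w) c hadj
  have hBmem : ∀ c u, u ∈ B c → u ∈ N ∧ H.Adj (u, g u) (v, c) := by
    intro c u hu; exact Finset.mem_filter.1 hu
  -- the simple extension lemma
  have hext1 : ∀ c ∈ L v,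
      (∀ w w', w ∈ B c → w' ∈ B c → w = w') →
      (∀ w ∈ B c, ∀ p, p ≠ v → ¬ H.Adj (w, g w) (p, g p)) → False := by
    intro c hc hpair hfree
    set f : V → ℕ := fun p => if p = v then c else g p with hfdef
    have hfv : f v = c := if_pos rfl
    have hfp : ∀ p, p ≠ v → f p = g p := fun p hp => if_neg hp
    have hfmem : ∀ p, f p ∈ L p := by
      intro p
      by_cases hp : p = v
      · subst hp; rw [hfv]; exact hc
      · rw [hfp p hp]; exact hg p hp
    have hfconf : ∀ x w w', H.Adj (x, f x) (w, f w) → H.Adj (x, f x) (w', f w') → w = w' := by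
      intro x w w' h h'
      by_cases hp : x = v
      · rw [hp, hfv] at h h'
        have hwv : w ≠ v := by
          intro he; rw [he, hfv] at h; exact H.irrefl h
        have hw'v : w' ≠ v := by
          intro he; rw [he, hfv] at h'; exact H.irrefl h'
        rw [hfp w hwv] at h
        rw [hfp w' hw'v] at h'
        exact hpair w w' (hBsub c w hwv h.symm) (hBsub c w' hw'v h'.symm)
      · rw [hfp x hp] at h h'
        by_cases hw : w = v
        · rw [hw, hfv] at h
          have hpB : x ∈ B c := hBsub c x hp h
          by_cases hw' : w' = v
          · rw [hw, hw']
          · rw [hfp w' hw'] at h'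
            exact absurd h' (hfree x hpB w' hw')
        · rw [hfp w hw] at h
          by_cases hw' : w' = v
          · rw [hw', hfv] at h'
            exact absurd h (hfree x (hBsub c x hp h') w hw)
          · rw [hfp w' hw'] at h'
            exact hgconf x hp w w' hw hw' h h'
    obtain ⟨S, hS⟩ := repset_of_fun L H f hfmem hfconf
    exact hno S hS
  -- the recoloring extension lemma
  have hext2 : ∀ c ∈ L v, ∀ u, B c = {u} → G.degree u = 3 →
      (∃ p, p ≠ v ∧ H.Adj (u, g u) (p, g p)) → False := by
    intro c hc u hBc hdeg hsat
    have huB : u ∈ B c := hBc ▸ Finset.mem_singleton_self u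
    have huN : u ∈ N := (hBmem c u huB).1
    have huv : u ≠ v := hneN u huN
    have k1 : H.Adj (u, g u) (v, c) := (hBmem c u huB).2
    obtain ⟨w0, hw0v, hw0a⟩ := hsat
    have hw0u : w0 ≠ u := by
      rintro rfl; exact H.irrefl hw0a
    have hw0adj : G.Adj u w0 := by
      by_contra hna
      exact hcov.no_edge u w0 (fun h => hw0u h.symm) hna (g u) (g w0) hw0a
    set Nu := G.neighborFinset u with hNudef
    have hNu : Nu.card = 3 := hdeg
    have hvNu : v ∈ Nu := (SimpleGraph.mem_neighborFinset G u v).2 ((hadjN u).1 huN).symm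
    have hw0Nu : w0 ∈ Nu := (SimpleGraph.mem_neighborFinset G u w0).2 hw0adj
    have hsub : ({v, w0} : Finset V) ⊆ Nu := by
      intro x hx
      rcases Finset.mem_insert.1 hx with rfl | hx
      · exact hvNu
      · exact (Finset.mem_singleton.1 hx) ▸ hw0Nu
    have hcard2 : ({v, w0} : Finset V).card = 2 := by
      rw [Finset.card_insert_of_notMem (Finset.notMem_singleton.2 hw0v.symm),
        Finset.card_singleton]
    obtain ⟨z, hz⟩ : ∃ z, Nu \ {v, w0} = {z} := by
      apply Finset.card_eq_one.1
      rw [Finset.card_sdiff_of_subset hsub, hNu, hcard2]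
    have hNu_cases : ∀ p ∈ Nu, p = v ∨ p = w0 ∨ p = z := by
      intro p hp
      by_cases h1 : p = v
      · exact Or.inl h1
      by_cases h2 : p = w0
      · exact Or.inr (Or.inl h2)
      have : p ∈ Nu \ {v, w0} := Finset.mem_sdiff.2 ⟨hp, by simp [h1, h2]⟩
      exact Or.inr (Or.inr (Finset.mem_singleton.1 (hz ▸ this)))
    have hzNu : z ∈ Nu := (Finset.sdiff_subset) (hz ▸ Finset.mem_singleton_self z)
    have hzu : z ≠ u := ((SimpleGraph.mem_neighborFinset G u z).1 hzNu).ne'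
    -- choose a'
    set bad : Finset ℕ := insert (g u) ((L u).filter (fun b => H.Adj (u, b) (z, g z))) with hbad
    have hbadcard : bad.card ≤ 2 := by
      refine le_trans (Finset.card_insert_le _ _) ?_
      have : ((L u).filter (fun b => H.Adj (u, b) (z, g z))).card ≤ 1 := by
        apply Finset.card_le_one.2
        intro b hb b' hb'
        exact hcov.matching z u hzu (g z) b b'
          (Finset.mem_filter.1 hb).2.symm (Finset.mem_filter.1 hb').2.symm
      omega
    have hnsub : ¬ (L u ⊆ bad) := by
      intro hsub'
      have := Finset.card_le_card hsub'
      rw [hL u] at this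
      omega
    obtain ⟨a', ha'L, ha'bad⟩ := Finset.not_subset.1 hnsub
    have ha'ne : a' ≠ g u := fun h => ha'bad (h ▸ Finset.mem_insert_self _ _)
    have ha'z : ¬ H.Adj (u, a') (z, g z) := fun h =>
      ha'bad (Finset.mem_insert_of_mem (Finset.mem_filter.2 ⟨ha'L, h⟩))
    have k2 : ¬ H.Adj (u, a') (v, c) := by
      intro h
      exact ha'ne (hcov.matching v u huv.symm c a' (g u) h.symm k1.symm)
    have k3 : ¬ H.Adj (u, a') (w0, g w0) := by
      intro h
      exact ha'ne (hcov.matching w0 u hw0u (g w0) a' (g u) h.symm hw0a.symm)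
    have k4 : ∀ p, p ≠ v → p ≠ w0 → p ≠ u → ¬ H.Adj (u, a') (p, g p) := by
      intro p hpv hpw hpu hadj
      by_cases hGadj : G.Adj u p
      · have hpNu : p ∈ Nu := (SimpleGraph.mem_neighborFinset G u p).2 hGadj
        rcases hNu_cases p hpNu with rfl | rfl | rfl
        · exact hpv rfl
        · exact hpw rfl
        · exact ha'z hadj
      · exact hcov.no_edge u p (fun h => hpu h.symm) hGadj a' (g p) hadj
    have k5 : ∀ p, p ≠ v → H.Adj (p, g p) (v, c) → p = u := by
      intro p hpv h
      have := hBsub c p hpv h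
      rw [hBc] at this
      exact Finset.mem_singleton.1 this
    have k6 : ∀ p, p ≠ v → H.Adj (u, g u) (p, g p) → p = w0 :=
      fun p hpv h => hgconf u huv p w0 hpv hw0v h hw0a
    -- the recolored function
    set f : V → ℕ := fun p => if p = v then c else if p = u then a' else g p with hfdef
    have hfv : f v = c := if_pos rfl
    have hfu : f u = a' := by
      show (if u = v then c else if u = u then a' else g u) = a'
      rw [if_neg huv, if_pos rfl]
    have hfp : ∀ p, p ≠ v → p ≠ u → f p = g p := by
      intro p h1 h2
      show (if p = v then c else if p = u then a' else g p) = g p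
      rw [if_neg h1, if_neg h2]
    have hfmem : ∀ p, f p ∈ L p := by
      intro p
      by_cases h1 : p = v
      · subst h1; rw [hfv]; exact hc
      by_cases h2 : p = u
      · subst h2; rw [hfu]; exact ha'L
      · rw [hfp p h1 h2]; exact hg p h1
    have hvno : ∀ w, ¬ H.Adj (v, f v) (w, f w) := by
      intro w h
      rw [hfv] at h
      by_cases h1 : w = v
      · rw [h1, hfv] at h; exact H.irrefl h
      by_cases h2 : w = u
      · rw [h2, hfu] at h; exact k2 h.symm
      · rw [hfp w h1 h2] at h
        exact h2 (k5 w h1 h.symm)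
    have huno : ∀ w, ¬ H.Adj (u, f u) (w, f w) := by
      intro w h
      rw [hfu] at h
      by_cases h1 : w = v
      · rw [h1, hfv] at h; exact k2 h
      by_cases h2 : w = u
      · rw [h2, hfu] at h; exact H.irrefl h
      by_cases h3 : w = w0
      · rw [hfp w h1 h2, h3] at h; exact k3 h
      · rw [hfp w h1 h2] at h; exact k4 w h1 h3 h2 h
    have hred : ∀ p, p ≠ v → p ≠ u → ∀ q, H.Adj (p, f p) (q, f q) →
        q ≠ v ∧ q ≠ u ∧ H.Adj (p, g p) (q, g q) := by
      intro p hpv hpu q h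
      rw [hfp p hpv hpu] at h
      have hqv : q ≠ v := by
        intro he
        rw [he, hfv] at h
        exact hpu (k5 p hpv h)
      have hqu : q ≠ u := by
        intro he
        rw [he, hfu] at h
        by_cases hpw : p = w0
        · rw [hpw] at h; exact k3 h.symm
        · exact k4 p hpv hpw hpu h.symm
      rw [hfp q hqv hqu] at h
      exact ⟨hqv, hqu, h⟩
    have hfconf : ∀ p w w', H.Adj (p, f p) (w, f w) → H.Adj (p, f p) (w', f w') → w = w' := by
      intro p w w' h h'
      by_cases hp1 : p = v
      · rw [hp1] at h; exact absurd h (hvno w)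
      by_cases hp2 : p = u
      · rw [hp2] at h; exact absurd h (huno w)
      obtain ⟨hw1, hw2, hadjw⟩ := hred p hp1 hp2 w h
      obtain ⟨hw'1, hw'2, hadjw'⟩ := hred p hp1 hp2 w' h'
      exact hgconf p hp1 w w' hw1 hw'1 hadjw hadjw'
    obtain ⟨S, hS⟩ := repset_of_fun L H f hfmem hfconf
    exact hno S hS
  -- counting: sum of blocker counts ≤ 4
  have hone : ∀ u ∈ N, ((L v).filter (fun c => H.Adj (u, g u) (v, c))).card ≤ 1 := by
    intro u hu
    apply Finset.card_le_one.2
    intro b hb b' hb'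
    exact hcov.matching u v (hneN u hu) (g u) b b'
      (Finset.mem_filter.1 hb).2 (Finset.mem_filter.1 hb').2
  have hsum : ∑ c ∈ L v, (B c).card ≤ 4 := by
    have heq : ∑ c ∈ L v, (B c).card
        = ∑ u ∈ N, ((L v).filter (fun c => H.Adj (u, g u) (v, c))).card := by
      simp only [hBdef, Finset.card_filter]
      rw [Finset.sum_comm]
    rw [heq]
    calc ∑ u ∈ N, ((L v).filter (fun c => H.Adj (u, g u) (v, c))).card
        ≤ ∑ _u ∈ N, 1 := Finset.sum_le_sum hone
      _ = 4 := by rw [Finset.sum_const, smul_eq_mul, mul_one, hN]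
  -- main case split
  by_cases hempty : ∃ c ∈ L v, B c = ∅
  · obtain ⟨c, hc, hBc⟩ := hempty
    exact hext1 c hc (fun w w' hw _ => absurd (hBc ▸ hw) (Finset.notMem_empty w))
      (fun w hw => absurd (hBc ▸ hw) (Finset.notMem_empty w))
  push_neg at hempty
  have hpos : ∀ c ∈ L v, 1 ≤ (B c).card := by
    intro c hc
    exact Finset.card_pos.2 (hempty c hc)
  -- at least two colors with exactly one blocker
  have hTcard : 2 ≤ ((L v).filter (fun c => (B c).card = 1)).card := by
    have h6 : ∀ c ∈ L v, 2 ≤ (B c).card + (if (B c).card = 1 then 1 else 0) := by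
      intro c hc
      have := hpos c hc
      split_ifs with h
      · omega
      · omega
    have hsum6 : (6 : ℕ) ≤ ∑ c ∈ L v, ((B c).card + (if (B c).card = 1 then 1 else 0)) := by
      calc (6 : ℕ) = ∑ _c ∈ L v, 2 := by
            rw [Finset.sum_const, smul_eq_mul, hL v]
        _ ≤ _ := Finset.sum_le_sum h6
    rw [Finset.sum_add_distrib, ← Finset.card_filter] at hsum6
    omega
  have h12 : 1 < ((L v).filter (fun c => (B c).card = 1)).card := by omega
  obtain ⟨c1, hc1T, c2, hc2T, hc12⟩ := Finset.one_lt_card.1 h12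
  have hc1L : c1 ∈ L v := (Finset.mem_filter.1 hc1T).1
  have hc2L : c2 ∈ L v := (Finset.mem_filter.1 hc2T).1
  obtain ⟨u1, hu1⟩ := Finset.card_eq_one.1 (Finset.mem_filter.1 hc1T).2
  obtain ⟨u2, hu2⟩ := Finset.card_eq_one.1 (Finset.mem_filter.1 hc2T).2
  have hu1B : u1 ∈ B c1 := hu1 ▸ Finset.mem_singleton_self u1
  have hu2B : u2 ∈ B c2 := hu2 ▸ Finset.mem_singleton_self u2
  have hu1N : u1 ∈ N := (hBmem c1 u1 hu1B).1
  have hu2N : u2 ∈ N := (hBmem c2 u2 hu2B).1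
  have hu12 : u1 ≠ u2 := by
    rintro rfl
    exact hc12 (hcov.matching u1 v (hneN u1 hu1N) (g u1) c1 c2
      (hBmem c1 u1 hu1B).2 (hBmem c2 u1 hu2B).2)
  have h3deg : G.degree u1 = 3 ∨ G.degree u2 = 3 := by
    by_contra hboth
    push_neg at hboth
    have h1 : u1 ∈ N.filter (fun u => ¬ G.degree u = 3) :=
      Finset.mem_filter.2 ⟨hu1N, hboth.1⟩
    have h2 : u2 ∈ N.filter (fun u => ¬ G.degree u = 3) :=
      Finset.mem_filter.2 ⟨hu2N, hboth.2⟩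
    have hlt : 1 < (N.filter (fun u => ¬ G.degree u = 3)).card :=
      Finset.one_lt_card.2 ⟨u1, h1, u2, h2, hu12⟩
    have hsplit := Finset.card_filter_add_card_filter_not
      (s := N) (fun u => G.degree u = 3)
    omega
  -- saturation case split
  by_cases hs1 : ∃ p, p ≠ v ∧ H.Adj (u1, g u1) (p, g p)
  · by_cases hs2 : ∃ p, p ≠ v ∧ H.Adj (u2, g u2) (p, g p)
    · rcases h3deg with hd | hd
      · exact hext2 c1 hc1L u1 hu1 hd hs1
      · exact hext2 c2 hc2L u2 hu2 hd hs2
    · push_neg at hs2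
      refine hext1 c2 hc2L ?_ ?_
      · intro w w' hw hw'
        rw [hu2, Finset.mem_singleton] at hw hw'
        rw [hw, hw']
      · intro w hw p hp
        rw [hu2, Finset.mem_singleton] at hw
        subst hw
        exact hs2 p hp
  · push_neg at hs1
    refine hext1 c1 hc1L ?_ ?_
    · intro w w' hw hw'
      rw [hu1, Finset.mem_singleton] at hw hw'
      rw [hw, hw']
    · intro w hw p hp
      rw [hu1, Finset.mem_singleton] at hw
      subst hw
      exact hs1 p hp
end
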